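/- arXiv:2206.02068 — 11 statements merged into one kernel-verified Lean document; each statement's English description precedes it below -/
import Mathlib

section
/- Let X be a countable set, let p and q be probability measures on the power set of X with p strictly coherent, and let E = {E_i} be a countable partition of X. Then q comes from p by Jeffrey conditioning on E (i.e., q(A) = ∑_i q(E_i)·p(A | E_i) for all A ⊆ X) if and only if for each index i and all x, x' ∈ E_i one has q({x})/p({x}) = q({x'})/p({x'}). -/
open MeasureTheory ENNReal

/-- For probability measures `p, q` on the power set of a countable set `X`
with `p` strictly coherent, and a countable partition `E` of `X`, `q` comes from `p` by
Jeffrey conditioning on `E` iff for each block `Eᵢ` and all `x, x' ∈ Eᵢ` one has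
`q({x})/p({x}) = q({x'})/p({x'})`. -/
theorem jeffrey_iff_ratio_constant_on_blocks {X : Type*} [Countable X]
    (p q : @Measure X ⊤)
    (hp : @IsProbabilityMeasure X ⊤ p)
    (hq : @IsProbabilityMeasure X ⊤ q)
    (hcoh : ∀ A : Set X, A.Nonempty → 0 < p A)
    {ι : Type*} [Countable ι] (E : ι → Set X)
    (hdisj : Pairwise (Function.onFun Disjoint E))
    (hcover : (⋃ i, E i) = Set.univ)
    (hne : ∀ i, (E i).Nonempty) :
    (∀ A : Set X, q A = ∑' i, q (E i) * (p (A ∩ E i) / p (E i))) ↔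
      (∀ i, ∀ x ∈ E i, ∀ x' ∈ E i, q {x} / p {x} = q {x'} / p {x'}) := by
  have hmeas : ∀ s : Set X, MeasurableSet[⊤] s := fun s => trivial
  have pfin : ∀ s : Set X, p s ≠ ∞ := fun s => (measure_lt_top p s).ne
  have ppos : ∀ s : Set X, s.Nonempty → p s ≠ 0 := fun s hs => (hcoh s hs).ne'
  -- measure of a countable set is the sum of its singleton measures
  have hsum : ∀ (μ : @Measure X ⊤) (s : Set X), μ s = ∑' x : s, μ {(x : X)} := by
    intro μ s
    have : μ (⋃ x ∈ s, {x}) = ∑' x : s, μ {(x : X)} :=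
      measure_biUnion (Set.to_countable s)
        (fun x _ y _ hxy => by simp [Set.disjoint_singleton, hxy]) (fun x _ => trivial)
    rwa [Set.biUnion_of_singleton] at this
  -- each singleton measure lemma: q {y} determined by block ratio
  constructor
  · intro hJ i x hx x' hx'
    have key : ∀ y ∈ E i, q {y} = q (E i) * (p {y} / p (E i)) := by
      intro y hy
      rw [hJ {y}, tsum_eq_single i ?_]
      · rw [Set.inter_eq_self_of_subset_left (Set.singleton_subset_iff.2 hy)]
      · intro j hj
        have hempty : ({y} : Set X) ∩ E j = ∅ := by
          apply Set.eq_empty_of_forall_notMem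
          intro z hz
          rcases hz with ⟨hz1, hz2⟩
          rcases hz1 with rfl
          exact Set.disjoint_left.mp (hdisj hj) hz2 hy
        simp [hempty]
    have ratio : ∀ y ∈ E i, q {y} / p {y} = q (E i) / p (E i) := by
      intro y hy
      rw [key y hy]
      have h1 : p {y} ≠ 0 := ppos _ ⟨y, rfl⟩
      calc q (E i) * (p {y} / p (E i)) / p {y}
          = (p {y} * (p {y})⁻¹) * (q (E i) * (p (E i))⁻¹) := by
            simp only [div_eq_mul_inv]; ring
        _ = q (E i) / p (E i) := by
            rw [ENNReal.mul_inv_cancel h1 (pfin _), one_mul, div_eq_mul_inv]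
    rw [ratio x hx, ratio x' hx']
  · intro hr A
    choose x0 hx0 using hne
    set r : ι → ℝ≥0∞ := fun i => q {x0 i} / p {x0 i} with hrdef
    have hsing : ∀ i, ∀ y ∈ E i, q {y} = r i * p {y} := by
      intro i y hy
      have h1 : q {y} / p {y} = r i := hr i y hy (x0 i) (hx0 i)
      have := (ENNReal.eq_div_iff (ppos {y} ⟨y, rfl⟩) (pfin {y})).mp h1.symm
      rw [← this, mul_comm]
    have hblock : ∀ (i : ι) (s : Set X), s ⊆ E i → q s = r i * p s := by
      intro i s hs
      rw [hsum q s, hsum p s, ← ENNReal.tsum_mul_left]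
      exact tsum_congr fun x => hsing i x (hs x.2)
    have hEi : ∀ i, q (E i) = r i * p (E i) := fun i => hblock i (E i) le_rfl
    have hA : q A = ∑' i, q (A ∩ E i) := by
      have hU : A = ⋃ i, A ∩ E i := by
        rw [← Set.inter_iUnion, hcover, Set.inter_univ]
      calc q A = q (⋃ i, A ∩ E i) := by rw [← hU]
        _ = ∑' i, q (A ∩ E i) :=
            measure_iUnion
              (fun i j hij =>
                (hdisj hij).mono Set.inter_subset_right Set.inter_subset_right)
              (fun _ => trivial)
    rw [hA]
    refine tsum_congr fun i => ?_
    rw [hblock i (A ∩ E i) Set.inter_subset_right, hEi i, mul_assoc,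
      ENNReal.mul_div_cancel (ppos _ ⟨x0 i, hx0 i⟩) (pfin _)]
end

section
/- Let X be a countable set, and let p and q be probability measures on the power set of X with p strictly coherent. Then q comes from p by Jeffrey conditioning on some nontrivial countable partition of X if and only if there exist distinct elements x and x' of X such that q({x})/p({x}) = q({x'})/p({x'}). -/
open MeasureTheory ENNReal

private lemma aux_mul_div (k m b : ℝ≥0∞) (hb0 : b ≠ 0) (hbt : b ≠ ∞) :
    k * b * (m / b) = k * m := by
  rw [div_eq_mul_inv]
  have h : k * b * (m * b⁻¹) = k * m * (b * b⁻¹) := by ring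
  rw [h, ENNReal.mul_inv_cancel hb0 hbt, mul_one]

private lemma aux_div_div (a s b : ℝ≥0∞) (hb0 : b ≠ 0) (hbt : b ≠ ∞)
    (hs0 : s ≠ 0) (hst : s ≠ ∞) : (a * (s / b)) / s = a / b := by
  rw [div_eq_mul_inv, div_eq_mul_inv, div_eq_mul_inv]
  have h : a * (s * b⁻¹) * s⁻¹ = a * b⁻¹ * (s * s⁻¹) := by ring
  rw [h, ENNReal.mul_inv_cancel hs0 hst, mul_one]

/-- For probability measures `p, q` on the power set of a countable set `X`
with `p` strictly coherent, `q` comes from `p` by Jeffrey conditioning on some nontrivial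
countable partition of `X` iff there exist distinct `x, x' ∈ X` with
`q({x})/p({x}) = q({x'})/p({x'})`. -/
theorem jeffrey_nontrivial_iff_ratio_collision {X : Type} [Countable X]
    (p q : @Measure X ⊤)
    (hp : @IsProbabilityMeasure X ⊤ p)
    (hq : @IsProbabilityMeasure X ⊤ q)
    (hcoh : ∀ A : Set X, A.Nonempty → 0 < p A) :
    (∃ (ι : Type) (_ : Countable ι) (E : ι → Set X),
        Pairwise (Function.onFun Disjoint E) ∧
        (⋃ i, E i) = Set.univ ∧
        (∀ i, (E i).Nonempty) ∧
        (∃ i, ∃ x ∈ E i, ∃ y ∈ E i, x ≠ y) ∧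
        (∀ A : Set X, q A = ∑' i, q (E i) * (p (A ∩ E i) / p (E i)))) ↔
      (∃ x x' : X, x ≠ x' ∧ q {x} / p {x} = q {x'} / p {x'}) := by
  haveI := hp
  haveI := hq
  classical
  have hpne : ∀ s : Set X, p s ≠ ∞ := fun s => measure_ne_top p s
  have hp0 : ∀ s : Set X, s.Nonempty → p s ≠ 0 := fun s hs => (hcoh s hs).ne'
  constructor
  · rintro ⟨ι, hι, E, hdisj, hunion, hblk, ⟨i, x, hx, y, hy, hxy⟩, hJ⟩
    refine ⟨x, y, hxy, ?_⟩
    have key : ∀ z, z ∈ E i → q {z} = q (E i) * (p {z} / p (E i)) := by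
      intro z hz
      rw [hJ {z}, tsum_eq_single i]
      · rw [Set.inter_eq_self_of_subset_left (Set.singleton_subset_iff.2 hz)]
      · intro j hj
        have he : ({z} : Set X) ∩ E j = ∅ := by
          apply Set.eq_empty_iff_forall_notMem.2
          rintro w ⟨hw1, hw2⟩
          rw [Set.mem_singleton_iff] at hw1
          subst hw1
          exact Set.disjoint_left.mp (hdisj hj) hw2 hz
        simp [he]
    have ratio : ∀ z, z ∈ E i → q {z} / p {z} = q (E i) / p (E i) := by
      intro z hz
      rw [key z hz]
      exact aux_div_div _ _ _ (hp0 _ ⟨x, hx⟩) (hpne _)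
        (hp0 _ ⟨z, rfl⟩) (hpne _)
    rw [ratio x hx, ratio y hy]
  · rintro ⟨x, x', hxx', hr⟩
    have hqx : q {x} = q {x} / p {x} * p {x} :=
      (ENNReal.div_mul_cancel (hp0 {x} ⟨x, rfl⟩) (hpne {x})).symm
    have hqx' : q {x'} = q {x} / p {x} * p {x'} := by
      rw [hr]
      exact (ENNReal.div_mul_cancel (hp0 {x'} ⟨x', rfl⟩) (hpne {x'})).symm
    -- singleton computation for any measure
    have hsing : ∀ (μ : @Measure X ⊤) (A : Set X) (z : X),
        μ (A ∩ {z}) = if z ∈ A then μ {z} else 0 := by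
      intro μ A z
      by_cases h : z ∈ A
      · rw [if_pos h, Set.inter_eq_self_of_subset_right (Set.singleton_subset_iff.2 h)]
      · rw [if_neg h]
        have : A ∩ {z} = ∅ := by
          apply Set.eq_empty_iff_forall_notMem.2
          rintro w ⟨hw1, hw2⟩
          rw [Set.mem_singleton_iff] at hw2
          exact h (hw2 ▸ hw1)
        rw [this, measure_empty]
    have hpair : ∀ A : Set X, q (A ∩ {x, x'}) = q {x} / p {x} * p (A ∩ {x, x'}) := by
      intro A
      have hsplit : ∀ (μ : @Measure X ⊤), μ (A ∩ {x, x'}) = μ (A ∩ {x}) + μ (A ∩ {x'}) := by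
        intro μ
        have h1 : A ∩ {x, x'} = (A ∩ {x}) ∪ (A ∩ {x'}) := by
          rw [← Set.inter_union_distrib_left]
          rfl
        rw [h1, measure_union ?_ MeasurableSpace.measurableSet_top]
        exact Disjoint.mono Set.inter_subset_right Set.inter_subset_right
          (Set.disjoint_singleton.2 hxx')
      rw [hsplit q, hsplit p, mul_add]
      congr 1
      · rw [hsing q A x, hsing p A x]
        by_cases h : x ∈ A
        · rw [if_pos h, if_pos h]; exact hqx
        · rw [if_neg h, if_neg h, mul_zero]
      · rw [hsing q A x', hsing p A x']
        by_cases h : x' ∈ A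
        · rw [if_pos h, if_pos h]; exact hqx'
        · rw [if_neg h, if_neg h, mul_zero]
    have hqpair : q {x, x'} = q {x} / p {x} * p {x, x'} := by
      have := hpair Set.univ
      simpa using this
    refine ⟨{z : X // z ≠ x'}, inferInstance,
      fun z => if z.val = x then ({x, x'} : Set X) else {z.val}, ?_, ?_, ?_, ?_, ?_⟩
    · intro a b hab
      unfold Function.onFun
      dsimp only
      by_cases ha : a.val = x <;> by_cases hb : b.val = x
      · exact absurd (Subtype.ext (ha.trans hb.symm)) hab
      · rw [if_pos ha, if_neg hb, Set.disjoint_right]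
        intro w hw
        rw [Set.mem_singleton_iff] at hw
        subst hw
        simp [hb, b.prop]
      · rw [if_neg ha, if_pos hb, Set.disjoint_left]
        intro w hw
        rw [Set.mem_singleton_iff] at hw
        subst hw
        simp [ha, a.prop]
      · rw [if_neg ha, if_neg hb, Set.disjoint_singleton]
        exact fun h => hab (Subtype.ext h)
    · apply Set.eq_univ_iff_forall.2
      intro z
      by_cases hz : z = x'
      · refine Set.mem_iUnion.2 ⟨⟨x, hxx'⟩, ?_⟩
        simp [hz]
      · refine Set.mem_iUnion.2 ⟨⟨z, hz⟩, ?_⟩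
        by_cases hzx : z = x <;> simp [hzx]
    · intro z
      by_cases hz : z.val = x <;> simp [hz]
    · refine ⟨⟨x, hxx'⟩, x, ?_, x', ?_, hxx'⟩ <;> simp
    · intro A
      have hterm : ∀ z : {z : X // z ≠ x'},
          q (if z.val = x then ({x, x'} : Set X) else {z.val}) *
            (p (A ∩ if z.val = x then ({x, x'} : Set X) else {z.val}) /
              p (if z.val = x then ({x, x'} : Set X) else {z.val})) =
          q (A ∩ {z.val}) + if z.val = x then q (A ∩ {x'}) else 0 := by
        intro z
        by_cases hz : z.val = x
        · simp only [hz, if_pos]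
          rw [hqpair, aux_mul_div _ _ _ (hp0 _ ⟨x, by simp⟩) (hpne _), ← hpair A]
          have hsplit : q (A ∩ {x, x'}) = q (A ∩ {x}) + q (A ∩ {x'}) := by
            have h1 : A ∩ ({x, x'} : Set X) = (A ∩ {x}) ∪ (A ∩ {x'}) := by
              rw [← Set.inter_union_distrib_left]; rfl
            rw [h1, measure_union ?_ MeasurableSpace.measurableSet_top]
            exact Disjoint.mono Set.inter_subset_right Set.inter_subset_right
              (Set.disjoint_singleton.2 hxx')
          rw [hsplit]
        · simp only [hz, if_neg, if_false]
          rw [hsing q A z.val, hsing p A z.val]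
          by_cases h : z.val ∈ A
          · simp only [if_pos h]
            rw [ENNReal.div_self (hp0 {z.val} ⟨z.val, rfl⟩) (hpne {z.val}), mul_one, add_zero]
          · simp only [if_neg h]
            simp
      rw [tsum_congr hterm, ENNReal.tsum_add]
      have h2 : (∑' z : {z : X // z ≠ x'}, if z.val = x then q (A ∩ {x'}) else 0)
          = q (A ∩ {x'}) := by
        rw [tsum_eq_single (⟨x, hxx'⟩ : {z : X // z ≠ x'})]
        · simp
        · intro b hb
          rw [if_neg]
          intro h
          exact hb (Subtype.ext h)
      rw [h2]
      -- now q A = (∑' z : subtype, q (A ∩ {z.val})) + q (A ∩ {x'})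
      have hdecomp : q A = ∑' z : X, q (A ∩ {z}) := by
        have h1 : A = ⋃ z : X, A ∩ {z} := by
          ext w
          simp
        conv_lhs => rw [h1]
        rw [measure_iUnion ?_ (fun _ => MeasurableSpace.measurableSet_top)]
        intro a b hab
        exact Disjoint.mono Set.inter_subset_right Set.inter_subset_right
          (Set.disjoint_singleton.2 hab)
      rw [hdecomp, ENNReal.tsum_eq_add_tsum_ite x']
      rw [add_comm]
      congr 1
      have hsub : (∑' z : {z : X // z ≠ x'}, q (A ∩ {z.val}))
          = ∑' z : X, Set.indicator {w : X | w ≠ x'} (fun w => q (A ∩ {w})) z := by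
        exact tsum_subtype {w : X | w ≠ x'} (fun w => q (A ∩ {w}))
      rw [hsub]
      apply tsum_congr
      intro z
      by_cases hz : z = x'
      · simp [hz, Set.indicator]
      · simp [hz, Set.indicator]
end

section
/- Let X be a countable set with at least two elements, and let P be a nonempty countable family of probability distributions on X, each of which assigns positive probability to every point of X. Then the set of probability distributions q on X such that, for every p ∈ P, the ratios q(x)/p(x) (x ∈ X) are pairwise distinct, has cardinality equal to the cardinality of the continuum. -/
open Cardinal Set

/-- Key cancellation lemma: for positive `t, s` and `k ≠ m`,
`t^k * s^m = s^k * t^m` forces `t = s`. -/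
lemma pow_cross_eq {t s : ℝ} (ht : 0 < t) (hs : 0 < s) {k m : ℕ} (hkm : k ≠ m)
    (h : t ^ k * s ^ m = s ^ k * t ^ m) : t = s := by
  wlog hlt : m < k generalizing k m
  · exact this hkm.symm (by linarith) ((hkm.lt_or_gt).resolve_right hlt)
  · obtain ⟨d, rfl⟩ := Nat.exists_eq_add_of_lt hlt
    have h' : t ^ (m + d + 1) * s ^ m = s ^ (m + d + 1) * t ^ m := h
    have hd : t ^ (d + 1) * (t ^ m * s ^ m) = s ^ (d + 1) * (t ^ m * s ^ m) := by
      calc t ^ (d + 1) * (t ^ m * s ^ m) = t ^ (m + d + 1) * s ^ m := by ring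
        _ = s ^ (m + d + 1) * t ^ m := h'
        _ = s ^ (d + 1) * (t ^ m * s ^ m) := by ring
    have := mul_right_cancel₀ (by positivity : t ^ m * s ^ m ≠ 0) hd
    exact (pow_left_inj₀ ht.le hs.le (Nat.succ_ne_zero d)).mp this

/-- For a countable set `X` with at least two elements and a nonempty
countable family `P` of everywhere-positive probability distributions on `X`, the set of
probability distributions `q` on `X` such that for every `p ∈ P` the map `x ↦ q x / p x`
is injective (the Bayes blind spot of `P`) has the cardinality of the continuum. -/
theorem bayes_blind_spot_card_continuum {X : Type} [Countable X] [Nontrivial X]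
    (P : Set (X → ℝ)) (hPne : P.Nonempty) (hPcount : P.Countable)
    (hPpos : ∀ p ∈ P, ∀ x, 0 < p x) (hPsum : ∀ p ∈ P, HasSum p 1) :
    Cardinal.mk ↥{q : X → ℝ | (∀ x, 0 ≤ q x) ∧ HasSum q 1 ∧
        ∀ p ∈ P, Function.Injective fun x => q x / p x} = Cardinal.continuum := by
  set BS := {q : X → ℝ | (∀ x, 0 ≤ q x) ∧ HasSum q 1 ∧
      ∀ p ∈ P, Function.Injective fun x => q x / p x} with hBS
  -- upper bound
  have hupper : #BS ≤ 𝔠 := by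
    calc #BS ≤ #(X → ℝ) := mk_set_le _
    _ = #ℝ ^ #X := (Cardinal.power_def _ _).symm
    _ ≤ 𝔠 ^ ℵ₀ := by
        rw [Cardinal.mk_real]
        exact power_le_power_left continuum_ne_zero Cardinal.mk_le_aleph0
    _ = 𝔠 := continuum_power_aleph0
  -- an injection of X into ℕ
  obtain ⟨e, he⟩ : ∃ f : X → ℕ, Function.Injective f :=
    (countable_iff_exists_injective X).mp ‹Countable X›
  obtain ⟨a, b, hab⟩ := exists_pair_ne X
  -- the bad set
  set B : Set ℝ := ⋃ i : ↥P × X × X,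
      {t : ℝ | 0 < t ∧ t < 1 ∧ i.2.1 ≠ i.2.2 ∧
        t ^ e i.2.1 * (i.1 : X → ℝ) i.2.2 = t ^ e i.2.2 * (i.1 : X → ℝ) i.2.1} with hB
  have hPc : Countable ↥P := hPcount.to_subtype
  have hBcount : B.Countable := by
    apply Set.countable_iUnion
    rintro ⟨⟨p, hp⟩, x, y⟩
    apply Set.Subsingleton.countable
    rintro t ⟨ht0, ht1, hxy, hte⟩ s ⟨hs0, hs1, -, hse⟩
    have hexy : e x ≠ e y := fun h => hxy (he h)
    have hpx := (hPpos p hp x).ne'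
    have hpy := (hPpos p hp y).ne'
    apply pow_cross_eq ht0 hs0 hexy
    have hcross : (t ^ e x * s ^ e y) * (p y * p x) = (s ^ e x * t ^ e y) * (p y * p x) := by
      calc (t ^ e x * s ^ e y) * (p y * p x) = (t ^ e x * p y) * (s ^ e y * p x) := by ring
        _ = (t ^ e y * p x) * (s ^ e x * p y) := by rw [hte, hse]
        _ = (s ^ e x * t ^ e y) * (p y * p x) := by ring
    exact mul_right_cancel₀ (by simp [hpx, hpy]) hcross
  -- the good set
  set G : Set ℝ := Ioo (0:ℝ) 1 \ B with hG
  -- basic facts about `t ∈ G`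
  have hmemIoo : ∀ t ∈ G, 0 < t ∧ t < 1 := fun t ht => ⟨ht.1.1, ht.1.2⟩
  have hsummable : ∀ t ∈ G, Summable fun x : X => t ^ e x := by
    intro t ht
    exact ((summable_geometric_of_lt_one (hmemIoo t ht).1.le (hmemIoo t ht).2).comp_injective he)
  have hSpos : ∀ t ∈ G, 0 < ∑' x : X, t ^ e x := by
    intro t ht
    exact lt_of_lt_of_le (pow_pos (hmemIoo t ht).1 (e a))
      (Summable.le_tsum (hsummable t ht) a fun j _ => (pow_pos (hmemIoo t ht).1 _).le)
  -- the candidate distributions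
  set q : ℝ → X → ℝ := fun t x => t ^ e x / ∑' y : X, t ^ e y with hq
  have hqmem : ∀ t ∈ G, q t ∈ BS := by
    intro t ht
    have ht0 := (hmemIoo t ht).1
    have hS := hSpos t ht
    refine ⟨fun x => div_nonneg (pow_pos ht0 _).le hS.le, ?_, ?_⟩
    · have := (hsummable t ht).hasSum.div_const (∑' y : X, t ^ e y)
      rwa [div_self hS.ne'] at this
    · intro p hp x y hxy
      by_contra hne
      have hte : t ^ e x * p y = t ^ e y * p x := by
        have hpx := (hPpos p hp x).ne'
        have hpy := (hPpos p hp y).ne'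
        simp only [hq] at hxy
        field_simp at hxy
        -- hxy should now be an equation we can massage
        nlinarith [hxy, hS, (hPpos p hp x), (hPpos p hp y)]
      have : t ∈ B := by
        refine Set.mem_iUnion.mpr ⟨⟨⟨p, hp⟩, x, y⟩, ?_⟩
        exact ⟨ht0, (hmemIoo t ht).2, hne, hte⟩
      exact ht.2 this
  -- injectivity of `t ↦ q t`
  have hqinj : ∀ t ∈ G, ∀ s ∈ G, q t = q s → t = s := by
    intro t ht s hs hts
    have ht0 := (hmemIoo t ht).1
    have hs0 := (hmemIoo s hs).1
    have hSt := hSpos t ht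
    have hSs := hSpos s hs
    have hea : t ^ e a * (∑' y : X, s ^ e y) = s ^ e a * (∑' y : X, t ^ e y) := by
      have := congrFun hts a
      simp only [hq] at this
      exact (div_eq_div_iff hSt.ne' hSs.ne').mp this
    have heb : t ^ e b * (∑' y : X, s ^ e y) = s ^ e b * (∑' y : X, t ^ e y) := by
      have := congrFun hts b
      simp only [hq] at this
      exact (div_eq_div_iff hSt.ne' hSs.ne').mp this
    have heab : e a ≠ e b := fun h => hab (he h)
    apply pow_cross_eq ht0 hs0 heab
    have hcross : (t ^ e a * s ^ e b) * ((∑' y : X, s ^ e y) * (∑' y : X, t ^ e y))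
        = (s ^ e a * t ^ e b) * ((∑' y : X, s ^ e y) * (∑' y : X, t ^ e y)) := by
      calc (t ^ e a * s ^ e b) * ((∑' y : X, s ^ e y) * (∑' y : X, t ^ e y))
          = (t ^ e a * (∑' y : X, s ^ e y)) * (s ^ e b * (∑' y : X, t ^ e y)) := by ring
        _ = (s ^ e a * (∑' y : X, t ^ e y)) * (t ^ e b * (∑' y : X, s ^ e y)) := by
            rw [hea, heb]
        _ = (s ^ e a * t ^ e b) * ((∑' y : X, s ^ e y) * (∑' y : X, t ^ e y)) := by ring
    exact mul_right_cancel₀ (by positivity) hcross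
  -- `G` has cardinality continuum
  have hGcard : 𝔠 ≤ #G := by
    by_contra hlt
    push_neg at hlt
    have h1 : #(Ioo (0:ℝ) 1 \ (Ioo (0:ℝ) 1 ∩ B) : Set ℝ) + #(Ioo (0:ℝ) 1 ∩ B : Set ℝ)
        = #(Ioo (0:ℝ) 1 : Set ℝ) := mk_diff_add_mk inter_subset_left
    rw [Set.diff_self_inter] at h1
    have h2 : #(Ioo (0:ℝ) 1 ∩ B : Set ℝ) ≤ ℵ₀ := by
      have hc : (Ioo (0:ℝ) 1 ∩ B).Countable := hBcount.mono inter_subset_right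
      have := hc.to_subtype
      exact Cardinal.mk_le_aleph0
    have h3 : #(Ioo (0:ℝ) 1 \ B : Set ℝ) + #(Ioo (0:ℝ) 1 ∩ B : Set ℝ) < 𝔠 :=
      Cardinal.add_lt_of_lt aleph0_le_continuum hlt (h2.trans_lt aleph0_lt_continuum)
    rw [h1, Cardinal.mk_Ioo_real one_pos] at h3
    exact lt_irrefl _ h3
  -- lower bound via the injection `G → BS`
  have hlower : 𝔠 ≤ #BS := by
    refine hGcard.trans (Cardinal.mk_le_of_injective (f := fun t : G => (⟨q t, hqmem t t.2⟩ : BS)) ?_)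
    intro t s hts
    exact Subtype.ext (hqinj t t.2 s s.2 (congrArg Subtype.val hts))
  exact le_antisymm hupper hlower
end

section
/- Let (p^(k))_{k ≥ 1} be a countable family of probability distributions on ℕ with p^(k)_i > 0 for all i and k. Then there exists a probability distribution q on ℕ with q_i > 0 for all i such that, for every k, the map i ↦ q_i / p^(k)_i is injective; that is, the intersection of the Bayes blind spots BS(p^(k)) is nonempty. -/
open Set

lemma exists_pick_aux (ε : ℝ) (hε : 0 < ε) (B : Set ℝ) (hB : B.Countable) :
    ∃ x, x ∈ Set.Ioc 0 ε ∧ x ∉ B := by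
  by_contra h
  push_neg at h
  have : (Set.Ioc (0:ℝ) ε).Countable := hB.mono (fun x hx => h x hx)
  have := this.le_aleph0
  rw [Cardinal.mk_Ioc_real hε] at this
  exact absurd this (not_le.mpr Cardinal.aleph0_lt_continuum)

lemma exists_pick (p : ℕ → ℕ → ℝ) (n : ℕ) (f : ℕ → ℝ) :
    ∃ x : ℝ, x ∈ Set.Ioc 0 ((2:ℝ)⁻¹ ^ n) ∧
      ∀ m, m < n → ∀ k, x ≠ f m * p k n / p k m := by
  obtain ⟨x, hx, hxB⟩ := exists_pick_aux ((2:ℝ)⁻¹ ^ n) (by positivity)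
    (Set.range (fun mk : ℕ × ℕ => f mk.1 * p mk.2 n / p mk.2 mk.1))
    (Set.countable_range _)
  exact ⟨x, hx, fun m _ k hx' => hxB ⟨(m, k), hx'.symm⟩⟩

noncomputable def pickF (p : ℕ → ℕ → ℝ) : ℕ → ℕ → ℝ
  | 0 => fun _ => 0
  | n + 1 => Function.update (pickF p n) n
      (Classical.choose (exists_pick p n (pickF p n)))

noncomputable def aSeq (p : ℕ → ℕ → ℝ) (n : ℕ) : ℝ :=
  Classical.choose (exists_pick p n (pickF p n))

lemma pickF_eq (p : ℕ → ℕ → ℝ) : ∀ n m, m < n → pickF p n m = aSeq p m := by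
  intro n
  induction n with
  | zero => intro m hm; omega
  | succ n ih =>
    intro m hm
    rcases Nat.lt_succ_iff_lt_or_eq.mp hm with h | h
    · rw [pickF, Function.update_of_ne (by omega), ih m h]
    · subst h; rw [pickF, Function.update_self, aSeq]

lemma aSeq_mem (p : ℕ → ℕ → ℝ) (n : ℕ) : aSeq p n ∈ Set.Ioc 0 ((2:ℝ)⁻¹ ^ n) :=
  (Classical.choose_spec (exists_pick p n (pickF p n))).1

lemma aSeq_ne (p : ℕ → ℕ → ℝ) {m n : ℕ} (h : m < n) (k : ℕ) :
    aSeq p n ≠ aSeq p m * p k n / p k m := by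
  have := (Classical.choose_spec (exists_pick p n (pickF p n))).2 m h k
  rwa [pickF_eq p n m h] at this

/-- Given a countable family `(p^(k))` of probability distributions on `ℕ`
with all components positive, there is a probability distribution `q` on `ℕ` with all
components positive such that for every `k` the map `i ↦ qᵢ / p^(k)ᵢ` is injective;
i.e., the intersection of the Bayes blind spots `BS(p^(k))` is nonempty. -/
theorem bayes_blind_spot_inter_nonempty (p : ℕ → ℕ → ℝ)
    (hpos : ∀ k i, 0 < p k i) (hsum : ∀ k, HasSum (p k) 1) :
    ∃ q : ℕ → ℝ, (∀ i, 0 < q i) ∧ HasSum q 1 ∧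
      ∀ k, Function.Injective fun i => q i / p k i := by
  set a := aSeq p with ha
  have hapos : ∀ n, 0 < a n := fun n => (aSeq_mem p n).1
  have hsumm : Summable a := by
    apply Summable.of_nonneg_of_le (fun n => (hapos n).le) (fun n => (aSeq_mem p n).2)
    exact summable_geometric_of_lt_one (by norm_num) (by norm_num)
  set S := ∑' n, a n with hS
  have hSpos : 0 < S := Summable.tsum_pos hsumm (fun n => (hapos n).le) 0 (hapos 0)
  refine ⟨fun n => a n / S, fun n => div_pos (hapos n) hSpos, ?_, ?_⟩
  · have := hsumm.hasSum.div_const S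
    rwa [div_self hSpos.ne'] at this
  · intro k i j hij
    simp only at hij
    by_contra hne
    -- wlog: derive from the case m < n
    have key : ∀ m n : ℕ, m < n → a n / S / p k n ≠ a m / S / p k m := by
      intro m n hmn heq
      apply aSeq_ne p hmn k
      have hpm := (hpos k m).ne'
      have hpn := (hpos k n).ne'
      field_simp at heq ⊢
      have h2 : S * (a n * p k m) = S * (a m * p k n) := by linear_combination S * heq
      rw [ha] at h2; linear_combination (mul_left_cancel₀ hSpos.ne' h2)
    rcases lt_or_gt_of_ne hne with h | h
    · exact key i j h hij.symm
    · exact key j i h hij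
end

section
/- Let p be a probability distribution on ℕ with p_i > 0 for all i. Then the Bayes blind spot BS(p) is of second Baire category (i.e., not meagre) in S, where S carries the subspace topology induced by the ℓ¹-norm. -/
/-- The set of probability distributions on `ℕ`, as a subset of the Banach space `ℓ¹`. -/
def S : Set (lp (fun _ : ℕ => ℝ) 1) :=
  {q | (∀ i, 0 ≤ q i) ∧ HasSum (fun i => q i) 1}

/-- The Bayes blind spot of `p`, as a subset of `S` (with its ℓ¹-subspace topology). -/
def BS (p : ℕ → ℝ) : Set S := {q | Function.Injective fun i => q.1 i / p i}

open scoped ENNReal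

set_option maxHeartbeats 1000000

noncomputable section BBSAux

private lemma bbs_toReal_pos : (0:ℝ) < (1:ℝ≥0∞).toReal := by norm_num

private lemma bbs_summable_abs (q : lp (fun _ : ℕ => ℝ) 1) : Summable fun i => |q i| := by
  have := (lp.memℓp q).summable bbs_toReal_pos
  simpa [Real.norm_eq_abs] using this

private lemma bbs_summable (q : lp (fun _ : ℕ => ℝ) 1) : Summable fun i => q i :=
  (bbs_summable_abs q).of_abs

private lemma bbs_norm_eq (q : lp (fun _ : ℕ => ℝ) 1) : ‖q‖ = ∑' i, |q i| := by
  have := lp.norm_eq_tsum_rpow bbs_toReal_pos q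
  simpa [Real.norm_eq_abs] using this

private lemma bbs_eval_continuous (i : ℕ) :
    Continuous (fun q : lp (fun _ : ℕ => ℝ) 1 => q i) := by
  apply LipschitzWith.continuous (K := 1)
  apply LipschitzWith.of_dist_le_mul
  intro q r
  simp only [NNReal.coe_one, one_mul, dist_eq_norm]
  have := lp.norm_apply_le_norm (one_ne_zero : (1:ℝ≥0∞) ≠ 0) (q - r) i
  simpa [Real.norm_eq_abs] using this

private lemma bbs_tsum_continuous :
    Continuous (fun q : lp (fun _ : ℕ => ℝ) 1 => ∑' i, q i) := by
  apply LipschitzWith.continuous (K := 1)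
  apply LipschitzWith.of_dist_le_mul
  intro q r
  simp only [NNReal.coe_one, one_mul, dist_eq_norm]
  have h1 : (∑' i, q i) - (∑' i, r i) = ∑' i, ((q : ℕ → ℝ) i - (r : ℕ → ℝ) i) :=
    (Summable.tsum_sub (bbs_summable q) (bbs_summable r)).symm
  have h2 : ∀ i, (q : ℕ → ℝ) i - (r : ℕ → ℝ) i = (↑(q - r) : ℕ → ℝ) i := by
    intro i; simp
  calc ‖(∑' i, q i) - (∑' i, r i)‖ = ‖∑' i, (↑(q - r) : ℕ → ℝ) i‖ := by
        rw [h1, tsum_congr h2]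
    _ ≤ ∑' i, ‖(↑(q - r) : ℕ → ℝ) i‖ :=
        norm_tsum_le_tsum_norm (by simpa [Real.norm_eq_abs] using bbs_summable_abs (q - r))
    _ = ‖q - r‖ := by rw [bbs_norm_eq (q - r)]; simp [Real.norm_eq_abs]

private lemma bbs_isClosed_S : IsClosed S := by
  have h1 : IsClosed {q : lp (fun _ : ℕ => ℝ) 1 | ∀ i, 0 ≤ q i} := by
    have : {q : lp (fun _ : ℕ => ℝ) 1 | ∀ i, 0 ≤ q i}
        = ⋂ i, {q : lp (fun _ : ℕ => ℝ) 1 | 0 ≤ q i} := by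
      ext q; simp [Set.mem_iInter]
    rw [this]
    exact isClosed_iInter fun i => isClosed_le continuous_const (bbs_eval_continuous i)
  have h2 : IsClosed {q : lp (fun _ : ℕ => ℝ) 1 | ∑' i, q i = 1} :=
    isClosed_eq bbs_tsum_continuous continuous_const
  have : S = {q : lp (fun _ : ℕ => ℝ) 1 | ∀ i, 0 ≤ q i}
      ∩ {q : lp (fun _ : ℕ => ℝ) 1 | ∑' i, q i = 1} := by
    ext q
    constructor
    · rintro ⟨hq1, hq2⟩; exact ⟨hq1, hq2.tsum_eq⟩
    · rintro ⟨hq1, hq2⟩; exact ⟨hq1, hq2 ▸ (bbs_summable q).hasSum⟩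
  rw [this]
  exact h1.inter h2

/-- The point mass at `0` is in `S`. -/
private lemma bbs_S_nonempty : S.Nonempty := by
  refine ⟨lp.single 1 0 (1:ℝ), ?_, ?_⟩
  · intro i
    rcases eq_or_ne i 0 with h | h
    · rw [h, lp.single_apply_self]; norm_num
    · rw [lp.single_apply_ne 1 0 _ h]
  · have : (fun i => (lp.single 1 0 (1:ℝ) : lp (fun _ : ℕ => ℝ) 1) i)
        = fun i => if i = 0 then (1:ℝ) else 0 := by
      funext i
      rcases eq_or_ne i 0 with h | h
      · rw [h, lp.single_apply_self]; simp
      · rw [lp.single_apply_ne 1 0 _ h]; simp [h]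
    rw [this]
    exact hasSum_ite_eq 0 1

/-- Perturbation: move mass `δ` from coordinate `m` to coordinate `i`. -/
private lemma bbs_perturb (q : lp (fun _ : ℕ => ℝ) 1) (hq : q ∈ S) {i m : ℕ} (him : i ≠ m)
    {δ : ℝ} (hδ : 0 < δ) (hδm : δ ≤ q m) :
    ∃ q' : lp (fun _ : ℕ => ℝ) 1, q' ∈ S ∧ ‖q' - q‖ ≤ 2 * δ ∧
      (∀ n, (q' : ℕ → ℝ) n = q n + (if n = i then δ else 0) - (if n = m then δ else 0)) := by
  have hcoe : ∀ n, ((q + lp.single 1 i δ - lp.single 1 m δ : lp (fun _ : ℕ => ℝ) 1) : ℕ → ℝ) n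
      = q n + (if n = i then δ else 0) - (if n = m then δ else 0) := by
    intro n
    have h0 : ((q + lp.single 1 i δ - lp.single 1 m δ : lp (fun _ : ℕ => ℝ) 1) : ℕ → ℝ) n
        = q n + (lp.single 1 i δ : lp (fun _ : ℕ => ℝ) 1) n
          - (lp.single 1 m δ : lp (fun _ : ℕ => ℝ) 1) n := by
      simp
    rw [h0]
    congr 1
    · congr 1
      rcases eq_or_ne n i with h | h
      · rw [h, lp.single_apply_self]; simp
      · rw [lp.single_apply_ne 1 i _ h]; simp [h]
    · rcases eq_or_ne n m with h | h
      · rw [h, lp.single_apply_self]; simp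
      · rw [lp.single_apply_ne 1 m _ h]; simp [h]
  refine ⟨q + lp.single 1 i δ - lp.single 1 m δ, ⟨?_, ?_⟩, ?_, hcoe⟩
  · intro n
    rw [hcoe n]
    by_cases h : n = i
    · have hnm : n ≠ m := fun hm => him ((hm.symm.trans h).symm ▸ rfl : i = m)
      rw [if_pos h, if_neg hnm]
      have := hq.1 n
      linarith
    · rw [if_neg h]
      by_cases h' : n = m
      · rw [if_pos h']
        have : δ ≤ q n := by rw [h']; exact hδm
        linarith
      · rw [if_neg h']
        have := hq.1 n
        linarith
  · have h1 : HasSum (fun n => (if n = i then δ else 0 : ℝ)) δ := hasSum_ite_eq i δ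
    have h2 : HasSum (fun n => (if n = m then δ else 0 : ℝ)) δ := hasSum_ite_eq m δ
    have h3 := (hq.2.add h1).sub h2
    have h4 : (1 : ℝ) + δ - δ = 1 := by ring
    rw [h4] at h3
    have heq : (fun n => ((q + lp.single 1 i δ - lp.single 1 m δ : lp (fun _ : ℕ => ℝ) 1)
        : ℕ → ℝ) n) = fun n => q n + (if n = i then δ else 0) - (if n = m then δ else 0) :=
      funext hcoe
    rw [heq]
    exact h3
  · rw [bbs_norm_eq]
    have habs : ∀ n, |((q + lp.single 1 i δ - lp.single 1 m δ - q : lp (fun _ : ℕ => ℝ) 1)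
        : ℕ → ℝ) n| = (if n = i then δ else 0) + (if n = m then δ else 0) := by
      intro n
      have h0 : ((q + lp.single 1 i δ - lp.single 1 m δ - q : lp (fun _ : ℕ => ℝ) 1)
          : ℕ → ℝ) n = ((q + lp.single 1 i δ - lp.single 1 m δ : lp (fun _ : ℕ => ℝ) 1)
          : ℕ → ℝ) n - q n := by simp
      rw [h0, hcoe n]
      by_cases h : n = i
      · have hnm : n ≠ m := fun hm => him ((hm.symm.trans h).symm ▸ rfl : i = m)
        rw [if_pos h, if_neg hnm]
        simp [abs_of_pos hδ]
      · rw [if_neg h]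
        by_cases h' : n = m
        · rw [if_pos h']
          rw [abs_of_nonpos (by linarith)]
          ring
        · rw [if_neg h']
          simp
    have hsum2 : HasSum (fun n => (if n = i then δ else 0 : ℝ)
        + (if n = m then δ else 0)) (δ + δ) := (hasSum_ite_eq i δ).add (hasSum_ite_eq m δ)
    calc (∑' n, |((q + lp.single 1 i δ - lp.single 1 m δ - q : lp (fun _ : ℕ => ℝ) 1)
            : ℕ → ℝ) n|)
        = ∑' n, ((if n = i then δ else 0 : ℝ) + (if n = m then δ else 0)) :=
          tsum_congr habs
      _ = δ + δ := hsum2.tsum_eq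
      _ ≤ 2 * δ := by linarith

end BBSAux

/-- For a probability distribution `p` on `ℕ` with all components positive,
the Bayes blind spot `BS(p)` is of second Baire category (not meagre) in `S`. -/
theorem bayes_blind_spot_not_meagre (p : ℕ → ℝ)
    (hpos : ∀ i, 0 < p i) (hsum : HasSum p 1) :
    ¬ IsMeagre (BS p) := by
  haveI : CompleteSpace S := bbs_isClosed_S.completeSpace_coe
  haveI : Nonempty S := ⟨⟨bbs_S_nonempty.choose, bbs_S_nonempty.choose_spec⟩⟩
  -- the bad sets
  set C : ℕ × ℕ → Set S := fun ij =>
    {q : S | q.1 ij.1 * p ij.2 = q.1 ij.2 * p ij.1} with hC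
  -- each bad set is closed
  have hclosed : ∀ ij : ℕ × ℕ, IsClosed (C ij) := by
    intro ij
    exact isClosed_eq
      (((bbs_eval_continuous ij.1).comp continuous_subtype_val).mul continuous_const)
      (((bbs_eval_continuous ij.2).comp continuous_subtype_val).mul continuous_const)
  -- each bad set (for i ≠ j) has empty interior
  have hint : ∀ ij : ℕ × ℕ, ij.1 ≠ ij.2 → interior (C ij) = ∅ := by
    rintro ⟨i, j⟩ hij
    simp only at hij
    by_contra hne
    obtain ⟨x, hx⟩ := Set.nonempty_iff_ne_empty.mpr hne
    obtain ⟨ε, hε, hball⟩ := Metric.isOpen_iff.mp isOpen_interior x hx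
    have hxC : x ∈ C (i, j) := interior_subset hx
    simp only [hC, Set.mem_setOf_eq] at hxC
    -- find m ≠ i with x.1 m > 0
    obtain ⟨m, hmi, hm⟩ : ∃ m, m ≠ i ∧ 0 < x.1 m := by
      obtain ⟨k, hk⟩ : ∃ k, x.1 k ≠ 0 := by
        by_contra h
        push_neg at h
        have h0 : HasSum (fun n => x.1 n) 0 := by
          have : (fun n => x.1 n) = fun _ => (0:ℝ) := funext h
          rw [this]; exact hasSum_zero
        exact (one_ne_zero : (1:ℝ) ≠ 0) (x.2.2.unique h0)
      have hk' : 0 < x.1 k := lt_of_le_of_ne (x.2.1 k) (Ne.symm hk)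
      rcases eq_or_ne k i with h | h
      · have hi' : 0 < x.1 i := h ▸ hk'
        have hj : 0 < x.1 j := by nlinarith [hpos i, hpos j]
        exact ⟨j, Ne.symm hij, hj⟩
      · exact ⟨k, h, hk'⟩
    set δ := min (x.1 m) (ε / 3) with hδdef
    have hδpos : 0 < δ := lt_min hm (by linarith)
    have hδm : δ ≤ x.1 m := min_le_left _ _
    obtain ⟨q', hq'S, hq'norm, hq'coe⟩ :=
      bbs_perturb x.1 x.2 (Ne.symm hmi) hδpos hδm
    have hdist : dist (⟨q', hq'S⟩ : S) x < ε := by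
      rw [Subtype.dist_eq, dist_eq_norm]
      calc ‖q' - x.1‖ ≤ 2 * δ := hq'norm
        _ ≤ 2 * (ε / 3) := by
            have := min_le_right (x.1 m) (ε / 3); rw [← hδdef] at this; linarith
        _ < ε := by linarith
    have hmem : (⟨q', hq'S⟩ : S) ∈ C (i, j) :=
      interior_subset (hball hdist)
    simp only [hC, Set.mem_setOf_eq] at hmem
    -- but q' violates the equation
    have hqi : q' i = x.1 i + δ := by
      have h := hq'coe i
      rw [if_pos rfl, if_neg (fun h' : i = m => hmi (h'.symm))] at h
      linarith
    rcases eq_or_ne m j with hmj | hmj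
    · have hqj : q' j = x.1 j - δ := by
        have h := hq'coe j
        rw [if_neg (Ne.symm hij), if_pos hmj.symm] at h
        linarith
      rw [hqi, hqj] at hmem
      nlinarith [hpos i, hpos j]
    · have hqj : q' j = x.1 j := by
        have h := hq'coe j
        rw [if_neg (Ne.symm hij), if_neg (fun h' : j = m => hmj h'.symm)] at h
        linarith
      rw [hqi, hqj] at hmem
      nlinarith [hpos j]
  -- the complement of BS p is meagre
  have hcompl : IsMeagre (BS p)ᶜ := by
    rw [isMeagre_iff_countable_union_isNowhereDense]
    refine ⟨C '' {ij | ij.1 ≠ ij.2}, ?_, ?_, ?_⟩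
    · rintro t ⟨ij, hij, rfl⟩
      exact ((hclosed ij).isNowhereDense_iff).mpr (hint ij hij)
    · exact (Set.countable_univ.mono (Set.subset_univ _)).image C
    · intro q hq
      simp only [BS, Set.mem_compl_iff, Set.mem_setOf_eq, Function.Injective] at hq
      push_neg at hq
      obtain ⟨i, j, hdiv, hij⟩ := hq
      refine Set.mem_sUnion.mpr ⟨C (i, j), ⟨(i, j), hij, rfl⟩, ?_⟩
      simp only [hC, Set.mem_setOf_eq]
      have hpi := (hpos i).ne'
      have hpj := (hpos j).ne'
      field_simp at hdiv
      linarith [hdiv]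
  -- conclude
  intro hmeagre
  have hres : (∅ : Set S) ∈ residual S := by
    have := Filter.inter_mem hmeagre hcompl
    simpa [IsMeagre, Set.inter_comm] using this
  have hdense : Dense (∅ : Set S) := dense_of_mem_residual hres
  obtain ⟨y⟩ := (inferInstance : Nonempty S)
  exact absurd (hdense.closure_eq ▸ Set.mem_univ y) (by simp)
end

section
/- Let p be a probability distribution on ℕ with p_i > 0 for all i. Then the Bayes blind spot BS(p) is dense in S with respect to the topology on S induced by the ℓ¹-norm. -/
/-- Any interval `(a, b)` with `a < b` contains a point outside a given countable set. -/
lemma exists_mem_Ioo_not_mem {T : Set ℝ} (hT : T.Countable) {a b : ℝ} (hab : a < b) :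
    ∃ t ∈ Set.Ioo a b, t ∉ T := by
  by_contra h
  push_neg at h
  have hc : (Set.Ioo a b).Countable := hT.mono h
  have := hc.le_aleph0
  rw [Cardinal.mk_Ioo_real hab] at this
  exact absurd this (not_le.mpr Cardinal.aleph0_lt_continuum)

/-- For a probability distribution `p` on `ℕ` with all components positive,
the Bayes blind spot `BS(p)` is dense in `S` for the ℓ¹-topology. -/
theorem bayes_blind_spot_dense (p : ℕ → ℝ)
    (hpos : ∀ i, 0 < p i) (hsum : HasSum p 1) :
    Dense (BS p) := by
  rw [Metric.dense_iff]
  intro q ε hε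
  -- the weight sequence
  set c : ℕ → ℝ := fun i => (2⁻¹ : ℝ) ^ i with hc
  have hc_pos : ∀ i, 0 < c i := fun i => pow_pos (by norm_num) i
  have hc_le1 : ∀ i, c i ≤ 1 := fun i => pow_le_one₀ (by norm_num) (by norm_num)
  have hc_inj : Function.Injective c := by
    have : StrictAnti c := pow_right_strictAnti₀ (by norm_num) (by norm_num)
    exact this.injective
  set u : ℕ → ℝ := fun i => c i * p i with hudef
  have hu_nonneg : ∀ i, 0 ≤ u i := fun i => mul_nonneg (hc_pos i).le (hpos i).le
  have hu_le : ∀ i, u i ≤ p i := fun i => by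
    simpa using mul_le_mul_of_nonneg_right (hc_le1 i) (hpos i).le
  have hu_sum : Summable u := Summable.of_nonneg_of_le hu_nonneg hu_le hsum.summable
  set σ : ℝ := ∑' i, u i with hσdef
  have hσ0 : 0 ≤ σ := tsum_nonneg hu_nonneg
  have hσ1 : σ ≤ 1 := by
    calc σ ≤ ∑' i, p i := Summable.tsum_le_tsum hu_le hu_sum hsum.summable
    _ = 1 := hsum.tsum_eq
  set d : ℕ → ℝ := fun i => q.1 i / p i with hd
  set T : Set ℝ := Set.range (fun ij : ℕ × ℕ => (d ij.2 - d ij.1) / (c ij.1 - c ij.2)) with hT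
  obtain ⟨t, ⟨ht0, htε⟩, htT⟩ :=
    exists_mem_Ioo_not_mem (T := T) (Set.countable_range _) (half_pos hε)
  have hden : (0:ℝ) < 1 + t * σ := by positivity
  set r : ℕ → ℝ := fun i => (q.1 i + t * u i) / (1 + t * σ) with hrdef
  have hqsum : HasSum (fun i => q.1 i) 1 := q.2.2
  have hr_sum : HasSum r 1 := by
    have h1 : HasSum (fun i => q.1 i + t * u i) (1 + t * σ) :=
      hqsum.add (hu_sum.hasSum.mul_left t)
    have := h1.div_const (1 + t * σ)
    rwa [div_self hden.ne'] at this
  have hr_nonneg : ∀ i, 0 ≤ r i := fun i =>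
    div_nonneg (add_nonneg (q.2.1 i) (mul_nonneg ht0.le (hu_nonneg i))) hden.le
  have hr_mem : Memℓp r 1 := by
    apply memℓp_gen
    simp only [ENNReal.toReal_one, Real.rpow_one, Real.norm_eq_abs]
    exact hr_sum.summable.abs
  set x : lp (fun _ : ℕ => ℝ) 1 := ⟨r, hr_mem⟩ with hx
  have hxS : x ∈ S := ⟨hr_nonneg, hr_sum⟩
  have key : ∀ i, r i / p i = (d i + t * c i) / (1 + t * σ) := by
    intro i
    have hp := (hpos i).ne'
    simp only [hrdef, hd, hudef]
    rw [div_div, div_eq_div_iff (mul_ne_zero hden.ne' hp) hden.ne']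
    field_simp
  refine ⟨⟨x, hxS⟩, ?_, ?_⟩
  · -- distance bound
    rw [Metric.mem_ball, Subtype.dist_eq, dist_eq_norm]
    have hnorm : ‖x - q.1‖ = ∑' i, ‖(x - q.1 : lp (fun _ : ℕ => ℝ) 1) i‖ := by
      have := lp.norm_eq_tsum_rpow (p := 1) (by norm_num) (x - q.1)
      simpa using this
    rw [hnorm]
    have hbound : ∀ i, ‖(x - q.1 : lp (fun _ : ℕ => ℝ) 1) i‖ ≤ t * u i + t * σ * q.1 i := by
      intro i
      have hcoe : (x - q.1 : lp (fun _ : ℕ => ℝ) 1) i = r i - q.1 i := by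
        simp [hx]
        rfl
      rw [hcoe]
      have hre : r i - q.1 i = (t * u i - t * σ * q.1 i) / (1 + t * σ) := by
        rw [hrdef]; field_simp; ring
      rw [hre, Real.norm_eq_abs, abs_div, abs_of_pos hden]
      have h1 : |t * u i - t * σ * q.1 i| ≤ t * u i + t * σ * q.1 i := by
        calc |t * u i - t * σ * q.1 i| ≤ |t * u i| + |t * σ * q.1 i| := abs_sub _ _
        _ = t * u i + t * σ * q.1 i := by
            rw [abs_of_nonneg (mul_nonneg ht0.le (hu_nonneg i)),
              abs_of_nonneg (mul_nonneg (mul_nonneg ht0.le hσ0) (q.2.1 i))]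
      calc |t * u i - t * σ * q.1 i| / (1 + t * σ)
          ≤ |t * u i - t * σ * q.1 i| / 1 := by
            apply div_le_div_of_nonneg_left (abs_nonneg _) one_pos
            · linarith [mul_nonneg ht0.le hσ0]
      _ = |t * u i - t * σ * q.1 i| := by rw [div_one]
      _ ≤ _ := h1
    have hrhs : HasSum (fun i => t * u i + t * σ * q.1 i) (t * σ + t * σ * 1) :=
      (hu_sum.hasSum.mul_left t).add (hqsum.mul_left (t * σ))
    have hlhs_sum : Summable fun i => ‖(x - q.1 : lp (fun _ : ℕ => ℝ) 1) i‖ := by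
      have := (lp.memℓp (x - q.1)).summable (p := 1) (by norm_num)
      simpa using this
    calc ∑' i, ‖(x - q.1 : lp (fun _ : ℕ => ℝ) 1) i‖
        ≤ ∑' i, (t * u i + t * σ * q.1 i) := Summable.tsum_le_tsum hbound hlhs_sum hrhs.summable
    _ = t * σ + t * σ * 1 := hrhs.tsum_eq
    _ ≤ 2 * t := by nlinarith
    _ < ε := by linarith
  · -- injectivity
    intro i j hij
    simp only at hij
    have h2 : (d i + t * c i) / (1 + t * σ) = (d j + t * c j) / (1 + t * σ) := by
      rw [← key i, ← key j]; exact hij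
    have h3 : d i + t * c i = d j + t * c j := by
      field_simp at h2
      exact h2
    by_contra hne
    apply htT
    refine ⟨(i, j), ?_⟩
    have hcne : c i - c j ≠ 0 := sub_ne_zero.mpr (fun h => hne (hc_inj h))
    field_simp
    linarith
end

section
/- Let p be a probability distribution on ℕ with p_i > 0 for all i. Then the Bayes blind spot BS(p) has empty interior in S with respect to the topology on S induced by the ℓ¹-norm; that is, for every q ∈ BS(p) and every ε > 0 there exists q' ∈ S \ BS(p) with ∑_i |q_i − q'_i| < ε. -/
/-- For a probability distribution `p` on `ℕ` with all components positive,
the Bayes blind spot `BS(p)` has empty interior in `S` for the ℓ¹-topology. -/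
theorem bayes_blind_spot_interior_empty (p : ℕ → ℝ)
    (hpos : ∀ i, 0 < p i) (hsum : HasSum p 1) :
    interior (BS p) = ∅ := by
  rw [Set.eq_empty_iff_forall_notMem]
  intro q hq
  obtain ⟨ε, hε, hball⟩ := Metric.isOpen_iff.1 isOpen_interior q hq
  obtain ⟨hqnn, hqsum⟩ := q.2
  have hsummable : Summable (fun i => q.1 i) := ⟨1, hqsum⟩
  have htend := hsummable.tendsto_atTop_zero
  obtain ⟨N, hN⟩ := Metric.tendsto_atTop.1 htend (ε/8) (by positivity)
  have hsmall : ∀ n ≥ N, q.1 n < ε/8 := by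
    intro n hn
    have := hN n hn
    rw [Real.dist_eq, sub_zero, abs_of_nonneg (hqnn n)] at this
    exact this
  set j := N
  set k := N + 1
  have hjk : j ≠ k := by omega
  have hpjk : 0 < p j + p k := by have := hpos j; have := hpos k; linarith
  set c : ℝ := (q.1 j + q.1 k) / (p j + p k) with hc
  have hc0 : 0 ≤ c := div_nonneg (by have := hqnn j; have := hqnn k; linarith) hpjk.le
  have hcsum : c * (p j + p k) = q.1 j + q.1 k := div_mul_cancel₀ _ hpjk.ne'
  set a : ℝ := c * p j - q.1 j with ha
  set b : ℝ := c * p k - q.1 k with hb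
  have hab : a + b = 0 := by
    have h := hcsum; rw [mul_add] at h; rw [ha, hb]; linarith
  have hcpj : 0 ≤ c * p j := mul_nonneg hc0 (hpos j).le
  have hcpk : 0 ≤ c * p k := mul_nonneg hc0 (hpos k).le
  have hcpj' : c * p j ≤ q.1 j + q.1 k := by nlinarith [hpos k, hc0]
  have hcpk' : c * p k ≤ q.1 j + q.1 k := by nlinarith [hpos j, hc0]
  have habs : |a| + |b| < ε := by
    have h1 : |a| ≤ q.1 j + q.1 k + q.1 j := by
      rw [abs_le]; constructor <;> [skip; skip] <;>
        simp only [ha] <;> nlinarith [hqnn j, hqnn k]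
    have h2 : |b| ≤ q.1 j + q.1 k + q.1 k := by
      rw [abs_le]; constructor <;> [skip; skip] <;>
        simp only [hb] <;> nlinarith [hqnn j, hqnn k]
    have hj := hsmall j (le_refl N)
    have hk := hsmall k (by omega)
    linarith
  -- the perturbed distribution
  set q' : lp (fun _ : ℕ => ℝ) 1 :=
    q.1 + lp.single 1 j a + lp.single 1 k b with hq'
  have hq'apply : ∀ i, q' i = q.1 i + (if i = j then a else 0) + (if i = k then b else 0) := by
    intro i
    simp only [hq', lp.coeFn_add, Pi.add_apply, lp.single_apply]
    by_cases h1 : i = j <;> by_cases h2 : i = k <;> simp [h1, h2, Pi.single_apply]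
  have hq'j : q' j = c * p j := by rw [hq'apply]; simp [hjk, ha]
  have hq'k : q' k = c * p k := by rw [hq'apply]; simp [Ne.symm hjk, hb]
  have hq'nn : ∀ i, 0 ≤ q' i := by
    intro i
    by_cases hij : i = j
    · subst hij; rw [hq'j]; exact hcpj
    · by_cases hik : i = k
      · subst hik; rw [hq'k]; exact hcpk
      · rw [hq'apply]; simp [hij, hik]; exact hqnn i
  have hq'sum : HasSum (fun i => q' i) 1 := by
    have h1 : HasSum (fun i => if i = j then a else 0) a := hasSum_ite_eq j a
    have h2 : HasSum (fun i => if i = k then b else 0) b := hasSum_ite_eq k b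
    have := (hqsum.add h1).add h2
    rw [show (1 : ℝ) + a + b = 1 by linarith] at this
    convert this using 1
    funext i
    exact hq'apply i
  have hq'S : q' ∈ S := ⟨hq'nn, hq'sum⟩
  have hdist : dist (⟨q', hq'S⟩ : S) q < ε := by
    rw [Subtype.dist_eq, dist_eq_norm]
    have : q' - q.1 = lp.single 1 j a + lp.single 1 k b := by
      rw [hq']; abel
    rw [this]
    have hp1 : 0 < (1 : ENNReal).toReal := by norm_num
    have n1 : ‖lp.single (E := fun _ : ℕ => ℝ) 1 j a‖ = ‖a‖ :=
      lp.norm_single (E := fun _ : ℕ => ℝ) (p := 1) zero_lt_one j a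
    have n2 : ‖lp.single (E := fun _ : ℕ => ℝ) 1 k b‖ = ‖b‖ :=
      lp.norm_single (E := fun _ : ℕ => ℝ) (p := 1) zero_lt_one k b
    have hle := norm_add_le (lp.single (E := fun _ : ℕ => ℝ) 1 j a)
      (lp.single (E := fun _ : ℕ => ℝ) 1 k b)
    rw [n1, n2, Real.norm_eq_abs, Real.norm_eq_abs] at hle
    linarith
  have hmem : (⟨q', hq'S⟩ : S) ∈ BS p := interior_subset (hball hdist)
  have : q' j / p j = q' k / p k := by
    rw [hq'j, hq'k, mul_div_assoc, mul_div_assoc,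
      div_self (hpos j).ne', div_self (hpos k).ne']
  exact hjk (hmem this)
end

section
/- Let p be a probability distribution on ℕ with p_i > 0 for all i, and for indices 1 ≤ i < j let S_{i,j} = {q ∈ S : q_i / p_i = q_j / p_j}. Then S_{i,j} is a closed subset of S with empty interior in S (hence nowhere dense in S), where S carries the subspace topology induced by the ℓ¹-norm. -/
theorem aux_cont (k : ℕ) : Continuous (fun q : S => q.1 k) := by
  haveI : Fact ((1:ENNReal) ≤ 1) := ⟨le_refl _⟩
  exact ((continuous_apply k).comp (lp.uniformContinuous_coe (E := fun _ : ℕ => ℝ)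
    (p := 1)).continuous).comp continuous_subtype_val

theorem single_coe (k m : ℕ) :
    (lp.single 1 k (1:ℝ) : lp (fun _ : ℕ => ℝ) 1) m = if m = k then 1 else 0 := by
  by_cases h : m = k
  · subst h; simp [lp.single_apply_self]
  · simp [lp.single_apply_ne 1 k _ h, h]

/-- For a probability distribution `p` on `ℕ` with all components positive
and indices `i < j`, the set `S_{i,j} = {q ∈ S : qᵢ/pᵢ = qⱼ/pⱼ}` is closed in `S` and has
empty interior in `S` (hence is nowhere dense in `S`), for the ℓ¹-subspace topology. -/
theorem ratio_coincidence_set_closed_and_interior_empty (p : ℕ → ℝ)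
    (hpos : ∀ i, 0 < p i) (hsum : HasSum p 1) (i j : ℕ) (hij : i < j) :
    IsClosed {q : S | q.1 i / p i = q.1 j / p j} ∧
      interior {q : S | q.1 i / p i = q.1 j / p j} = ∅ := by
  constructor
  · exact isClosed_eq ((aux_cont i).div_const _) ((aux_cont j).div_const _)
  · rw [Set.eq_empty_iff_forall_notMem]
    intro x hx
    have hxmem : x ∈ {q : S | q.1 i / p i = q.1 j / p j} := interior_subset hx
    simp only [Set.mem_setOf_eq] at hxmem
    rw [mem_interior_iff_mem_nhds, Metric.mem_nhds_iff] at hx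
    obtain ⟨ε, hε, hball⟩ := hx
    set q : lp (fun _ : ℕ => ℝ) 1 := x.1 with hq
    set s : lp (fun _ : ℕ => ℝ) 1 := lp.single 1 i (1:ℝ) with hs
    set δ : ℝ := min (1/2) (ε / (2 * (‖s‖ + ‖q‖ + 1))) with hδ
    have hden : 0 < 2 * (‖s‖ + ‖q‖ + 1) := by positivity
    have hδpos : 0 < δ := lt_min (by norm_num) (by positivity)
    have hδ1 : δ < 1 := lt_of_le_of_lt (min_le_left _ _) (by norm_num)
    set y : lp (fun _ : ℕ => ℝ) 1 := (1 - δ) • q + δ • s with hy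
    have hyapp : ∀ m, y m = (1 - δ) * q m + δ * (if m = i then 1 else 0) := by
      intro m
      rw [hy]
      simp only [lp.coeFn_add, lp.coeFn_smul, Pi.add_apply, Pi.smul_apply, smul_eq_mul]
      rw [hs, single_coe]
    have hqS : q ∈ S := x.2
    have hyS : y ∈ S := by
      constructor
      · intro m
        rw [hyapp m]
        by_cases h : m = i
        · simp only [if_pos h]
          nlinarith [hqS.1 m]
        · simp only [if_neg h]
          nlinarith [hqS.1 m]
      · have h1 : HasSum (fun m => (1 - δ) * q m) (1 - δ) := by
          simpa using hqS.2.mul_left (1 - δ)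
        have h2 : HasSum (fun m => δ * (if m = i then 1 else 0)) δ := by
          have := (hasSum_ite_eq i (1:ℝ)).mul_left δ
          simpa using this
        have := h1.add h2
        simp only [hyapp]
        simpa using this
    have hdist : dist (⟨y, hyS⟩ : S) x < ε := by
      rw [Subtype.dist_eq]
      have hsub : y - q = δ • (s - q) := by
        rw [hy]; module
      have : dist y q = δ * ‖s - q‖ := by
        rw [dist_eq_norm, hsub, norm_smul, Real.norm_eq_abs, abs_of_pos hδpos]
      rw [show dist y x.1 = dist y q from rfl, this]
      have h1 : ‖s - q‖ ≤ ‖s‖ + ‖q‖ := norm_sub_le _ _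
      have h2 : δ ≤ ε / (2 * (‖s‖ + ‖q‖ + 1)) := min_le_right _ _
      have h3 : δ * (2 * (‖s‖ + ‖q‖ + 1)) ≤ ε := by
        rw [← le_div_iff₀ hden] at *; exact h2
      nlinarith [norm_nonneg (s - q)]
    have hmem := hball hdist
    simp only [Set.mem_setOf_eq] at hmem
    rw [hyapp i, hyapp j, if_pos rfl, if_neg hij.ne'] at hmem
    rw [div_eq_div_iff (hpos i).ne' (hpos j).ne'] at hmem hxmem
    have hpi := hpos i
    have hpj := hpos j
    nlinarith
end

section
/- Let p be a probability distribution on ℕ with p_i > 0 for all i. Then the complement of the Bayes blind spot in S, namely S \ BS(p) = {q ∈ S : q_i/p_i = q_j/p_j for some i < j}, is a meagre (first Baire category) subset of S, where S carries the subspace topology induced by the ℓ¹-norm. -/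
noncomputable def BBee (i : ℕ) : lp (fun _ : ℕ => ℝ) 1 := lp.single 1 i (1 : ℝ)

lemma BBee_apply (i k : ℕ) : BBee i k = if k = i then (1:ℝ) else 0 := by
  by_cases h : k = i
  · subst h; simp [BBee, lp.single_apply_self]
  · simp [BBee, lp.single_apply_ne _ _ _ h, h]

lemma BBcoord_cont (i : ℕ) : Continuous fun f : lp (fun _ : ℕ => ℝ) 1 => f i :=
  (continuous_apply i).comp (lp.uniformContinuous_coe (p := 1)).continuous

/-- The key nowhere-density lemma. -/
lemma BBnowhere (p : ℕ → ℝ) (hpos : ∀ i, 0 < p i) {i j : ℕ} (hij : i ≠ j) :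
    IsNowhereDense {q : S | q.1 i * p j = q.1 j * p i} := by
  set C : Set S := {q : S | q.1 i * p j = q.1 j * p i} with hC
  have hclosed : IsClosed C := by
    apply isClosed_eq
    · exact ((BBcoord_cont i).comp continuous_subtype_val).mul continuous_const
    · exact ((BBcoord_cont j).comp continuous_subtype_val).mul continuous_const
  rw [hclosed.isNowhereDense_iff, interior_eq_empty_iff_dense_compl]
  rw [Metric.dense_iff]
  intro x r hr
  by_cases hx : x ∈ C
  · -- perturb x
    set c : ℝ := ‖BBee i - x.1‖ with hc
    have hc0 : (0:ℝ) < c + 1 := by positivity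
    set δ : ℝ := min (r / (2 * (c + 1))) (1/2) with hδ
    have hδ0 : 0 < δ := lt_min (by positivity) (by norm_num)
    have hδ1 : δ ≤ 1/2 := min_le_right _ _
    set y : lp (fun _ : ℕ => ℝ) 1 := (1 - δ) • x.1 + δ • BBee i with hy
    have hyk : ∀ k, y k = (1 - δ) * x.1 k + δ * (if k = i then (1:ℝ) else 0) := by
      intro k
      show (1 - δ) * x.1 k + δ * BBee i k = _
      simp [hy, lp.coeFn_add, lp.coeFn_smul, Pi.add_apply, Pi.smul_apply, smul_eq_mul, BBee_apply]
    have hyS : y ∈ S := by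
      constructor
      · intro k
        rw [hyk k]
        have h1 : (0:ℝ) ≤ 1 - δ := by linarith
        have := x.2.1 k
        positivity
      · have h1 : HasSum (fun k => (1 - δ) * x.1 k) (1 - δ) := by
          simpa using x.2.2.mul_left (1 - δ)
        have h2 : HasSum (fun k => δ * (if k = i then (1:ℝ) else 0)) δ := by
          simpa using (hasSum_ite_eq i (1:ℝ)).mul_left δ
        have := h1.add h2
        simp only [← hyk] at this
        convert this using 1
        ring
    have hsub : y - x.1 = δ • (BBee i - x.1) := by
      rw [hy]; module
    have hdist : dist x (⟨y, hyS⟩ : S) < r := by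
      rw [Subtype.dist_eq, dist_eq_norm]
      have : x.1 - y = (-δ) • (BBee i - x.1) := by
        rw [hy]; module
      rw [this, norm_smul]
      simp only [norm_neg, Real.norm_eq_abs, abs_of_pos hδ0]
      calc δ * ‖BBee i - x.1‖ ≤ δ * (c + 1) := by
            apply mul_le_mul_of_nonneg_left _ hδ0.le
            rw [← hc]; linarith
        _ ≤ (r / (2 * (c + 1))) * (c + 1) := by
            apply mul_le_mul_of_nonneg_right (min_le_left _ _) hc0.le
        _ = r / 2 := by field_simp
        _ < r := by linarith
    refine ⟨⟨y, hyS⟩, Metric.mem_ball'.mpr hdist, ?_⟩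
    intro hmem
    have hyi : y i = (1 - δ) * x.1 i + δ := by rw [hyk i]; simp
    have hyj : y j = (1 - δ) * x.1 j := by
      rw [hyk j]; simp [Ne.symm hij, hij]
    have heq : y i * p j = y j * p i := hmem
    rw [hyi, hyj] at heq
    have hx' : x.1 i * p j = x.1 j * p i := hx
    have : δ * p j = 0 := by nlinarith [hx']
    have := (hpos j).ne'
    nlinarith [hpos j, hδ0]
  · exact ⟨x, Metric.mem_ball_self hr, hx⟩

/-- For a probability distribution `p` on `ℕ` with all components positive,
the complement of the Bayes blind spot in `S`, namely
`{q ∈ S : qᵢ/pᵢ = qⱼ/pⱼ for some i < j}`, is meagre in `S` for the ℓ¹-subspace topology. -/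
theorem bayes_blind_spot_compl_meagre (p : ℕ → ℝ)
    (hpos : ∀ i, 0 < p i) (hsum : HasSum p 1) :
    IsMeagre {q : S | ∃ i j : ℕ, i < j ∧ q.1 i / p i = q.1 j / p j} := by
  classical
  set F : ℕ × ℕ → Set S := fun ij =>
    if ij.1 < ij.2 then {q : S | q.1 ij.1 * p ij.2 = q.1 ij.2 * p ij.1} else ∅ with hF
  rw [isMeagre_iff_countable_union_isNowhereDense]
  refine ⟨Set.range F, ?_, Set.countable_range F, ?_⟩
  · rintro t ⟨ij, rfl⟩
    by_cases h : ij.1 < ij.2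
    · rw [hF]; simp only [if_pos h]
      exact BBnowhere p hpos h.ne
    · rw [hF]; simp only [if_neg h]
      exact isNowhereDense_empty
  · rintro q ⟨i, j, hij, heq⟩
    refine Set.mem_sUnion.mpr ⟨F (i, j), Set.mem_range_self _, ?_⟩
    rw [hF]
    simp only [if_pos hij]
    have := (div_eq_div_iff (hpos i).ne' (hpos j).ne').mp heq
    exact this
end

section
/- Let p be a probability distribution on ℕ with p_i > 0 for all i, and for an integer ℓ ≥ 1 let S_ℓ denote the set of probability distributions q on ℕ for which there exist at least ℓ pairs (n, m) with n < m and q_n / p_n = q_m / p_m. Then S_ℓ is dense in S for every ℓ ≥ 1, where S carries the subspace topology induced by the ℓ¹-norm. -/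
/-- For a probability distribution `p` on `ℕ` with all components
positive and an integer `ℓ ≥ 1`, the set `S_ℓ` of distributions `q` for which there are at
least `ℓ` pairs `(n, m)` with `n < m` and `qₙ/pₙ = qₘ/pₘ` is dense in `S` for the
ℓ¹-subspace topology. -/
theorem ratio_coincidence_level_set_dense (p : ℕ → ℝ)
    (hpos : ∀ i, 0 < p i) (hsum : HasSum p 1) (ℓ : ℕ) (hℓ : 1 ≤ ℓ) :
    Dense {q : S | ∃ F : Finset (ℕ × ℕ), ℓ ≤ F.card ∧
      ∀ nm ∈ F, nm.1 < nm.2 ∧ q.1 nm.1 / p nm.1 = q.1 nm.2 / p nm.2} := by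
  rw [Metric.dense_iff]
  intro x r hr
  obtain ⟨hq0, hq1⟩ := x.2
  set q : ℕ → ℝ := fun i => x.1 i with hqdef
  have hqs : Summable q := hq1.summable
  -- choose a cutoff N ≥ 1 with small tail
  have htail : ∀ᶠ n in Filter.atTop, ∑' k, q (k + n) < r / 2 :=
    (tendsto_sum_nat_add q).eventually (gt_mem_nhds (by linarith))
  obtain ⟨N, hN, hN1⟩ := (htail.and (Filter.eventually_ge_atTop 1)).exists
  set T : ℝ := ∑' k, q (k + N) with hTdef
  have hT0 : 0 ≤ T := tsum_nonneg fun k => hq0 _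
  -- the perturbed distribution
  set q' : ℕ → ℝ := fun i => if i = 0 then q 0 + T else if i < N then q i else 0 with hq'def
  have hsupp : ∀ i ∉ Finset.range N, q' i = 0 := by
    intro i hi
    rw [Finset.mem_range, not_lt] at hi
    have h0 : i ≠ 0 := by omega
    simp [hq'def, h0, not_lt.2 hi]
  have hq'eq : ∀ i ∈ Finset.range N, q' i = q i + (if i = 0 then T else 0) := by
    intro i hi
    rw [Finset.mem_range] at hi
    by_cases h : i = 0
    · simp [hq'def, h]
    · simp [hq'def, h, hi]
  have hsum1 : ∑ i ∈ Finset.range N, q' i = 1 := by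
    rw [Finset.sum_congr rfl hq'eq, Finset.sum_add_distrib,
      Finset.sum_ite_eq' (Finset.range N) 0 (fun _ => T)]
    have h0 : (0 : ℕ) ∈ Finset.range N := Finset.mem_range.2 (by omega)
    rw [if_pos h0]
    have := Summable.sum_add_tsum_nat_add N hqs
    rw [← hTdef] at this
    rw [this, hq1.tsum_eq]
  have hq'sum : HasSum q' 1 := by
    rw [← hsum1]; exact hasSum_sum_of_ne_finset_zero hsupp
  have hq'nonneg : ∀ i, 0 ≤ q' i := by
    intro i
    by_cases h : i = 0
    · simp only [hq'def, h, if_pos rfl]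
      exact add_nonneg (hq0 0) hT0
    · by_cases h' : i < N <;> simp [hq'def, h, h', hq0 i, hqdef]
  have hmem : Memℓp q' 1 := by
    apply memℓp_gen
    apply summable_of_ne_finset_zero (s := Finset.range N)
    intro i hi
    rw [hsupp i hi]
    simp
  set Q : lp (fun _ : ℕ => ℝ) 1 := ⟨q', hmem⟩ with hQdef
  have hQcoe : ∀ i, Q i = q' i := fun i => rfl
  have hQS : Q ∈ S := ⟨fun i => hq'nonneg i, hq'sum⟩
  refine ⟨⟨Q, hQS⟩, ?_, ?_⟩
  · -- in the ball
    rw [Metric.mem_ball, Subtype.dist_eq, dist_eq_norm]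
    have h1 : (0 : ℝ) < (1 : ENNReal).toReal := by norm_num
    have hnorm : ‖Q - x.1‖ = ∑' i, ‖q' i - q i‖ := by
      rw [lp.norm_eq_tsum_rpow h1]
      simp only [ENNReal.toReal_one, div_one, Real.rpow_one]
      refine tsum_congr fun i => ?_
      rw [lp.coeFn_sub, Pi.sub_apply]
    have hg : Summable fun i => ‖q' i - q i‖ := by
      have hs1 : Summable fun i => |q' i| + |q i| :=
        (hq'sum.summable.abs).add (hqs.abs)
      refine hs1.of_nonneg_of_le (fun i => norm_nonneg _) (fun i => ?_)
      simpa [Real.norm_eq_abs] using norm_sub_le (q' i) (q i)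
    have hsplit := Summable.sum_add_tsum_nat_add N hg
    have hfront : ∑ i ∈ Finset.range N, ‖q' i - q i‖ = T := by
      have : ∀ i ∈ Finset.range N, ‖q' i - q i‖ = (if i = 0 then T else 0) := by
        intro i hi
        rw [hq'eq i hi]
        by_cases h : i = 0 <;> simp [h, abs_of_nonneg hT0]
      rw [Finset.sum_congr rfl this,
        Finset.sum_ite_eq' (Finset.range N) 0 (fun _ => T),
        if_pos (Finset.mem_range.2 (by omega : (0:ℕ) < N))]
    have htailsum : ∑' i, ‖q' (i + N) - q (i + N)‖ = T := by
      have : ∀ i, ‖q' (i + N) - q (i + N)‖ = q (i + N) := by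
        intro i
        rw [hsupp (i + N) (by rw [Finset.mem_range]; omega), zero_sub, norm_neg]
        exact abs_of_nonneg (hq0 _)
      rw [tsum_congr this]
    rw [hnorm, ← hsplit, hfront, htailsum]
    linarith [hN]
  · -- in the level set
    refine ⟨(Finset.range ℓ).image (fun j => (N + j, N + j + 1)), ?_, ?_⟩
    · rw [Finset.card_image_of_injective _ (fun a b h => by
        have := congrArg Prod.fst h
        simp only at this
        omega), Finset.card_range]
    · intro nm hnm
      rw [Finset.mem_image] at hnm
      obtain ⟨j, _, rfl⟩ := hnm
      refine ⟨by omega, ?_⟩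
      have h1 : q' (N + j) = 0 := hsupp _ (by rw [Finset.mem_range]; omega)
      have h2 : q' (N + j + 1) = 0 := hsupp _ (by rw [Finset.mem_range]; omega)
      show q' (N + j) / p (N + j) = q' (N + j + 1) / p (N + j + 1)
      rw [h1, h2, zero_div, zero_div]
end

section
/- Let p be a probability distribution on ℕ with p_i > 0 for all i. Then, in the topology on S induced by the ℓ¹-norm, the Bayes blind spot BS(p) is neither an open subset of S nor a closed subset of S. -/
namespace BayesAux

/-- `t = ∑ 2⁻ⁱ pᵢ`. -/
noncomputable def tt (p : ℕ → ℝ) : ℝ := ∑' i, (2 : ℝ)⁻¹ ^ i * p i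

/-- The perturbed distribution `q(δ)ᵢ = pᵢ (1 + δ (2⁻ⁱ - t))`. -/
noncomputable def ff (p : ℕ → ℝ) (δ : ℝ) (i : ℕ) : ℝ :=
  p i * (1 + δ * ((2 : ℝ)⁻¹ ^ i - tt p))

variable {p : ℕ → ℝ}

lemma c_pos (i : ℕ) : (0 : ℝ) < (2 : ℝ)⁻¹ ^ i := by positivity

lemma c_le_one (i : ℕ) : ((2 : ℝ)⁻¹) ^ i ≤ 1 :=
  pow_le_one₀ (by norm_num) (by norm_num)

lemma summable_cp (hpos : ∀ i, 0 < p i) (hsum : HasSum p 1) :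
    Summable fun i => (2 : ℝ)⁻¹ ^ i * p i := by
  refine Summable.of_nonneg_of_le (fun i => mul_nonneg (c_pos i).le (hpos i).le) (fun i => ?_) hsum.summable
  calc (2 : ℝ)⁻¹ ^ i * p i ≤ 1 * p i :=
        mul_le_mul_of_nonneg_right (c_le_one i) (hpos i).le
    _ = p i := one_mul _

lemma hasSum_cp (hpos : ∀ i, 0 < p i) (hsum : HasSum p 1) :
    HasSum (fun i => (2 : ℝ)⁻¹ ^ i * p i) (tt p) :=
  (summable_cp hpos hsum).hasSum

lemma tt_nonneg (hpos : ∀ i, 0 < p i) : 0 ≤ tt p :=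
  tsum_nonneg fun i => by have := (hpos i).le; positivity

lemma tt_le_one (hpos : ∀ i, 0 < p i) (hsum : HasSum p 1) : tt p ≤ 1 := by
  have h := Summable.tsum_le_tsum (f := fun i => (2 : ℝ)⁻¹ ^ i * p i) (g := p)
    (fun i => by
      calc (2 : ℝ)⁻¹ ^ i * p i ≤ 1 * p i :=
            mul_le_mul_of_nonneg_right (c_le_one i) (hpos i).le
        _ = p i := one_mul _)
    (summable_cp hpos hsum) hsum.summable
  rwa [hsum.tsum_eq] at h

lemma abs_c_sub_tt_le_one (hpos : ∀ i, 0 < p i) (hsum : HasSum p 1) (i : ℕ) :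
    |(2 : ℝ)⁻¹ ^ i - tt p| ≤ 1 := by
  have h1 := c_pos i
  have h2 := c_le_one i
  have h3 := tt_nonneg hpos
  have h4 := tt_le_one hpos hsum
  rw [abs_le]; constructor <;> linarith

lemma ff_nonneg (hpos : ∀ i, 0 < p i) (hsum : HasSum p 1) {δ : ℝ}
    (h0 : 0 ≤ δ) (h1 : δ ≤ 1) (i : ℕ) : 0 ≤ ff p δ i := by
  have hb := abs_c_sub_tt_le_one hpos hsum i
  have hb' := abs_le.1 hb
  have : (0 : ℝ) ≤ 1 + δ * ((2 : ℝ)⁻¹ ^ i - tt p) := by nlinarith [hb'.1, hb'.2]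
  exact mul_nonneg (hpos i).le this

lemma ff_le (hpos : ∀ i, 0 < p i) (hsum : HasSum p 1) {δ : ℝ}
    (h0 : 0 ≤ δ) (h1 : δ ≤ 1) (i : ℕ) : ff p δ i ≤ 2 * p i := by
  have hb' := abs_le.1 (abs_c_sub_tt_le_one hpos hsum i)
  have hp := (hpos i).le
  have : 1 + δ * ((2 : ℝ)⁻¹ ^ i - tt p) ≤ 2 := by nlinarith [hb'.2]
  calc ff p δ i ≤ p i * 2 := mul_le_mul_of_nonneg_left this hp
    _ = 2 * p i := mul_comm _ _

lemma hasSum_ff (hpos : ∀ i, 0 < p i) (hsum : HasSum p 1) (δ : ℝ) :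
    HasSum (ff p δ) 1 := by
  have h1 : HasSum (fun i => p i + δ * ((2 : ℝ)⁻¹ ^ i * p i) - (δ * tt p) * p i)
      (1 + δ * tt p - (δ * tt p) * 1) :=
    (hsum.add ((hasSum_cp hpos hsum).mul_left δ)).sub (hsum.mul_left (δ * tt p))
  have heq : (fun i => p i + δ * ((2 : ℝ)⁻¹ ^ i * p i) - (δ * tt p) * p i) = ff p δ := by
    funext i; simp only [ff]; ring
  rw [heq] at h1
  convert h1 using 1; ring

lemma summable_ff (hpos : ∀ i, 0 < p i) (hsum : HasSum p 1) {δ : ℝ}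
    (h0 : 0 ≤ δ) (h1 : δ ≤ 1) : Summable (ff p δ) :=
  (hasSum_ff hpos hsum δ).summable

lemma memℓp_of_nonneg_summable {f : ℕ → ℝ} (hn : ∀ i, 0 ≤ f i) (hs : Summable f) :
    Memℓp f 1 := by
  apply memℓp_gen
  have : (fun i => ‖f i‖ ^ (1 : ENNReal).toReal) = f := by
    funext i
    simp [Real.norm_eq_abs, abs_of_nonneg (hn i)]
  rw [this]; exact hs

lemma memℓp_ff (hpos : ∀ i, 0 < p i) (hsum : HasSum p 1) {δ : ℝ}
    (h0 : 0 ≤ δ) (h1 : δ ≤ 1) : Memℓp (ff p δ) 1 :=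
  memℓp_of_nonneg_summable (ff_nonneg hpos hsum h0 h1) (summable_ff hpos hsum h0 h1)

lemma ff_ratio (hpos : ∀ i, 0 < p i) (δ : ℝ) (i : ℕ) :
    ff p δ i / p i = 1 + δ * ((2 : ℝ)⁻¹ ^ i - tt p) := by
  rw [ff, mul_div_cancel_left₀ _ (hpos i).ne']

lemma ff_inj (hpos : ∀ i, 0 < p i) {δ : ℝ} (hδ : δ ≠ 0) :
    Function.Injective fun i => ff p δ i / p i := by
  intro i j hij
  simp only [ff_ratio hpos] at hij
  have h2 : δ * ((2 : ℝ)⁻¹ ^ i - tt p) = δ * ((2 : ℝ)⁻¹ ^ j - tt p) := by linarith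
  have h3 : (2 : ℝ)⁻¹ ^ i = (2 : ℝ)⁻¹ ^ j := by
    have := mul_left_cancel₀ hδ h2; linarith
  exact (pow_right_strictAnti₀ (by norm_num) (by norm_num)).injective h3

/-- The ℓ¹ norm of an lp element with p = 1. -/
lemma norm_eq_tsum (f : lp (fun _ : ℕ => ℝ) 1) : ‖f‖ = ∑' i, |f i| := by
  have := lp.norm_eq_tsum_rpow (p := 1) (E := fun _ : ℕ => ℝ) (by norm_num) f
  simpa [Real.norm_eq_abs] using this


lemma dist_ff_p (hpos : ∀ i, 0 < p i) (hsum : HasSum p 1) {δ : ℝ}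
    (h0 : 0 ≤ δ) (h1 : δ ≤ 1) : ∑' i, |ff p δ i - p i| ≤ δ := by
  have hb : ∀ i, |ff p δ i - p i| ≤ δ * p i := by
    intro i
    have he : ff p δ i - p i = δ * ((2 : ℝ)⁻¹ ^ i - tt p) * p i := by
      simp only [ff]; ring
    rw [he, abs_mul, abs_mul, abs_of_nonneg h0, abs_of_nonneg (hpos i).le]
    have h2 := abs_c_sub_tt_le_one hpos hsum i
    calc δ * |(2 : ℝ)⁻¹ ^ i - tt p| * p i ≤ δ * 1 * p i := by
          exact mul_le_mul_of_nonneg_right (mul_le_mul_of_nonneg_left h2 h0) (hpos i).le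
      _ = δ * p i := by ring
  have hs2 : Summable fun i => δ * p i := hsum.summable.mul_left δ
  have hs1 : Summable fun i => |ff p δ i - p i| :=
    Summable.of_nonneg_of_le (fun i => abs_nonneg _) hb hs2
  calc ∑' i, |ff p δ i - p i| ≤ ∑' i, δ * p i := Summable.tsum_le_tsum hb hs1 hs2
    _ = δ * ∑' i, p i := tsum_mul_left
    _ = δ := by rw [hsum.tsum_eq, mul_one]

/-- `A = r n + r (n+1)` where `r = ff p 1`. -/
noncomputable def AA (p : ℕ → ℝ) (n : ℕ) : ℝ := ff p 1 n + ff p 1 (n + 1)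

/-- The common ratio value. -/
noncomputable def vv (p : ℕ → ℝ) (n : ℕ) : ℝ := AA p n / (p n + p (n + 1))

/-- The perturbation of `r = ff p 1` equalizing the ratios at `n` and `n+1`. -/
noncomputable def gg (p : ℕ → ℝ) (n : ℕ) : ℕ → ℝ :=
  Function.update (Function.update (ff p 1) n (p n * vv p n)) (n + 1) (p (n + 1) * vv p n)

lemma gg_apply_n (n : ℕ) : gg p n n = p n * vv p n := by
  rw [gg, Function.update_of_ne (by omega), Function.update_self]

lemma gg_apply_n1 (n : ℕ) : gg p n (n + 1) = p (n + 1) * vv p n := by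
  rw [gg, Function.update_self]

lemma gg_apply_other {n i : ℕ} (h1 : i ≠ n) (h2 : i ≠ n + 1) : gg p n i = ff p 1 i := by
  rw [gg, Function.update_of_ne h2, Function.update_of_ne h1]

lemma s_pos (hpos : ∀ i, 0 < p i) (n : ℕ) : 0 < p n + p (n + 1) := by
  have := hpos n; have := hpos (n + 1); linarith

lemma AA_nonneg (hpos : ∀ i, 0 < p i) (hsum : HasSum p 1) (n : ℕ) : 0 ≤ AA p n :=
  add_nonneg (ff_nonneg hpos hsum zero_le_one le_rfl n)
    (ff_nonneg hpos hsum zero_le_one le_rfl (n + 1))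

lemma vv_nonneg (hpos : ∀ i, 0 < p i) (hsum : HasSum p 1) (n : ℕ) : 0 ≤ vv p n :=
  div_nonneg (AA_nonneg hpos hsum n) (s_pos hpos n).le

lemma vv_le_two (hpos : ∀ i, 0 < p i) (hsum : HasSum p 1) (n : ℕ) : vv p n ≤ 2 := by
  rw [vv, div_le_iff₀ (s_pos hpos n)]
  have h1 := ff_le hpos hsum zero_le_one le_rfl n
  have h2 := ff_le hpos hsum zero_le_one le_rfl (n + 1)
  rw [AA]; linarith

lemma gg_nonneg (hpos : ∀ i, 0 < p i) (hsum : HasSum p 1) (n i : ℕ) : 0 ≤ gg p n i := by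
  rcases eq_or_ne i (n + 1) with h | h
  · rw [h, gg_apply_n1]
    exact mul_nonneg (hpos _).le (vv_nonneg hpos hsum n)
  rcases eq_or_ne i n with h' | h'
  · rw [h', gg_apply_n]
    exact mul_nonneg (hpos _).le (vv_nonneg hpos hsum n)
  · rw [gg_apply_other h' h]
    exact ff_nonneg hpos hsum zero_le_one le_rfl i

lemma ab_sum (hpos : ∀ i, 0 < p i) (n : ℕ) :
    p n * vv p n + p (n + 1) * vv p n = AA p n := by
  have : p n * vv p n + p (n + 1) * vv p n = (p n + p (n + 1)) * vv p n := by ring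
  rw [this, vv, mul_div_cancel₀ _ (s_pos hpos n).ne']

lemma hasSum_gg (hpos : ∀ i, 0 < p i) (hsum : HasSum p 1) (n : ℕ) :
    HasSum (gg p n) 1 := by
  have h0 : HasSum (ff p 1) 1 := hasSum_ff hpos hsum 1
  have h1 := h0.update n (p n * vv p n)
  have h2 := h1.update (n + 1) (p (n + 1) * vv p n)
  rw [Function.update_of_ne (by omega : n + 1 ≠ n)] at h2
  have hval : p (n + 1) * vv p n - ff p 1 (n + 1) + (p n * vv p n - ff p 1 n + 1) = 1 := by
    have := ab_sum hpos n
    rw [AA] at this; linarith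
  rw [hval] at h2
  exact h2

lemma gg_not_inj (hpos : ∀ i, 0 < p i) (n : ℕ) :
    ¬ Function.Injective fun i => gg p n i / p i := by
  intro h
  have hr : gg p n n / p n = gg p n (n + 1) / p (n + 1) := by
    rw [gg_apply_n, gg_apply_n1, mul_div_cancel_left₀ _ (hpos n).ne',
      mul_div_cancel_left₀ _ (hpos (n + 1)).ne']
  have := h hr
  omega

lemma tsum_gg_sub (hpos : ∀ i, 0 < p i) (hsum : HasSum p 1) (n : ℕ) :
    ∑' i, |gg p n i - ff p 1 i| ≤ 8 * (p n + p (n + 1)) := by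
  have hzero : ∀ i ∉ ({n, n + 1} : Finset ℕ), |gg p n i - ff p 1 i| = 0 := by
    intro i hi
    simp only [Finset.mem_insert, Finset.mem_singleton, not_or] at hi
    rw [gg_apply_other hi.1 hi.2, sub_self, abs_zero]
  rw [tsum_eq_sum hzero, Finset.sum_pair (by omega : n ≠ n + 1)]
  have hv0 := vv_nonneg hpos hsum n
  have hv2 := vv_le_two hpos hsum n
  have hrn := ff_nonneg hpos hsum zero_le_one le_rfl n
  have hrn1 := ff_nonneg hpos hsum zero_le_one le_rfl (n + 1)
  have hln := ff_le hpos hsum zero_le_one le_rfl n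
  have hln1 := ff_le hpos hsum zero_le_one le_rfl (n + 1)
  have hpn := (hpos n).le
  have hpn1 := (hpos (n + 1)).le
  rw [gg_apply_n, gg_apply_n1]
  have h1 : |p n * vv p n - ff p 1 n| ≤ 4 * p n := by
    rw [abs_sub_le_iff]
    constructor <;> nlinarith
  have h2 : |p (n + 1) * vv p n - ff p 1 (n + 1)| ≤ 4 * p (n + 1) := by
    rw [abs_sub_le_iff]
    constructor <;> nlinarith
  linarith

end BayesAux

open BayesAux

/-- For a probability distribution `p` on `ℕ` with all components
positive, the Bayes blind spot `BS(p)` is neither open nor closed in `S` for the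
ℓ¹-subspace topology. -/
theorem bayes_blind_spot_neither_open_nor_closed (p : ℕ → ℝ)
    (hpos : ∀ i, 0 < p i) (hsum : HasSum p 1) :
    ¬ IsOpen (BS p) ∧ ¬ IsClosed (BS p) := by
  constructor
  · -- not open
    intro hopen
    have hrmem : Memℓp (ff p 1) 1 := memℓp_ff hpos hsum zero_le_one le_rfl
    set rl : lp (fun _ : ℕ => ℝ) 1 := ⟨ff p 1, hrmem⟩ with hrl
    have hrS : rl ∈ S := ⟨fun i => ff_nonneg hpos hsum zero_le_one le_rfl i,
      hasSum_ff hpos hsum 1⟩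
    set rS : S := ⟨rl, hrS⟩ with hrSdef
    have hrBS : rS ∈ BS p := ff_inj hpos one_ne_zero
    rw [Metric.isOpen_iff] at hopen
    obtain ⟨ε, hε, hball⟩ := hopen rS hrBS
    have htend : Filter.Tendsto p Filter.atTop (nhds 0) := hsum.summable.tendsto_atTop_zero
    obtain ⟨N, hN⟩ := Filter.eventually_atTop.1
      (htend.eventually (gt_mem_nhds (show 0 < ε / 32 by linarith)))
    have hgmem : Memℓp (gg p N) 1 :=
      memℓp_of_nonneg_summable (gg_nonneg hpos hsum N) (hasSum_gg hpos hsum N).summable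
    set gl : lp (fun _ : ℕ => ℝ) 1 := ⟨gg p N, hgmem⟩ with hgl
    have hgS : gl ∈ S := ⟨fun i => gg_nonneg hpos hsum N i, hasSum_gg hpos hsum N⟩
    set gS : S := ⟨gl, hgS⟩ with hgSdef
    have hdist : dist gS rS < ε := by
      rw [Subtype.dist_eq, dist_eq_norm, norm_eq_tsum]
      have hco : ∀ i, (((gl - rl : lp (fun _ : ℕ => ℝ) 1)) i) = gg p N i - ff p 1 i := by
        intro i
        rw [lp.coeFn_sub]
        rfl
      have : (fun i => |(gl - rl : lp (fun _ : ℕ => ℝ) 1) i|)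
          = fun i => |gg p N i - ff p 1 i| := by
        funext i; rw [hco]
      rw [this]
      have h8 := tsum_gg_sub hpos hsum N
      have hN1 := hN N le_rfl
      have hN2 := hN (N + 1) (by omega)
      linarith
    have := hball (Metric.mem_ball.2 hdist)
    exact gg_not_inj hpos N this
  · -- not closed
    intro hclosed
    have hpmem : Memℓp p 1 := memℓp_of_nonneg_summable (fun i => (hpos i).le) hsum.summable
    set pl : lp (fun _ : ℕ => ℝ) 1 := ⟨p, hpmem⟩ with hpl
    have hplS : pl ∈ S := ⟨fun i => (hpos i).le, hsum⟩
    set pS : S := ⟨pl, hplS⟩ with hpSdef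
    have hpnot : pS ∉ BS p := by
      intro h
      have h01 : (fun i => pS.1 i / p i) 0 = (fun i => pS.1 i / p i) 1 := by
        show p 0 / p 0 = p 1 / p 1
        rw [div_self (hpos 0).ne', div_self (hpos 1).ne']
      exact absurd (h h01) (by omega)
    have hclos : pS ∈ closure (BS p) := by
      rw [Metric.mem_closure_iff]
      intro ε hε
      set δ := min (ε / 2) 1 with hδdef
      have hδ0 : 0 < δ := lt_min (by linarith) one_pos
      have hδ1 : δ ≤ 1 := min_le_right _ _
      have hqmem : Memℓp (ff p δ) 1 := memℓp_ff hpos hsum hδ0.le hδ1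
      set ql : lp (fun _ : ℕ => ℝ) 1 := ⟨ff p δ, hqmem⟩ with hql
      have hqS : ql ∈ S := ⟨fun i => ff_nonneg hpos hsum hδ0.le hδ1 i, hasSum_ff hpos hsum δ⟩
      refine ⟨⟨ql, hqS⟩, ff_inj hpos hδ0.ne', ?_⟩
      rw [Subtype.dist_eq, dist_eq_norm, norm_eq_tsum]
      have : (fun i => |(pl - ql : lp (fun _ : ℕ => ℝ) 1) i|)
          = fun i => |ff p δ i - p i| := by
        funext i
        rw [lp.coeFn_sub]
        show |p i - ff p δ i| = _
        rw [abs_sub_comm]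
      rw [this]
      have hle := dist_ff_p hpos hsum hδ0.le hδ1
      have : δ ≤ ε / 2 := min_le_left _ _
      linarith
    rw [hclosed.closure_eq] at hclos
    exact hpnot hclos
end
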